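/- Let X_1, ..., X_m ∈ M_n(ℂ) and suppose for each j there is a unit-modulus z_j with W(z_j X_j) ⊂ S_{α_j}, α_j ∈ [0, π/2). Then ω(X_1 X_2 ⋯ X_m) ≤ ∏_{j=1}^m sec(α_j) ω(X_j). -/

import Mathlib

open Matrix Complex
open scoped ComplexOrder Matrix.Norms.L2Operator
set_option maxHeartbeats 1000000

/-- Hermitian real part `(X + Xᴴ)/2`. -/
noncomputable def reM {m : ℕ} (X : Matrix (Fin m) (Fin m) ℂ) : Matrix (Fin m) (Fin m) ℂ :=
  (1 / 2 : ℂ) • (X + Xᴴ)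

/-- Hermitian imaginary part `(X - Xᴴ)/(2i)`. -/
noncomputable def imM {m : ℕ} (X : Matrix (Fin m) (Fin m) ℂ) : Matrix (Fin m) (Fin m) ℂ :=
  (-Complex.I / 2) • (X - Xᴴ)

/-- Numerical range `W(X) = {⟨Xx, x⟩ : ‖x‖ = 1}`. -/
noncomputable def numRange {m : ℕ} (X : Matrix (Fin m) (Fin m) ℂ) : Set ℂ :=
  {z | ∃ x : EuclideanSpace ℂ (Fin m), ‖x‖ = 1 ∧ z = star (x : Fin m → ℂ) ⬝ᵥ X.mulVec x}

/-- Numerical radius `ω(X) = sup {|z| : z ∈ W(X)}`. -/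
noncomputable def numRadius {m : ℕ} (X : Matrix (Fin m) (Fin m) ℂ) : ℝ :=
  sSup ((fun w : ℂ => ‖w‖) '' numRange X)

/-- The sector `S_α`. -/
def sector (α : ℝ) : Set ℂ := {z : ℂ | 0 < z.re ∧ |z.im| ≤ Real.tan α * z.re}

/-- Operator norm of a matrix acting on Euclidean space. -/
noncomputable def opNorm {m : ℕ} (X : Matrix (Fin m) (Fin m) ℂ) : ℝ :=
  ‖Matrix.toEuclideanCLM (𝕜 := ℂ) X‖

namespace SecAux

variable {n : ℕ}

/-- quadratic form of a matrix at a Euclidean vector -/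
noncomputable def qf (A : Matrix (Fin n) (Fin n) ℂ) (x : EuclideanSpace ℂ (Fin n)) : ℂ :=
  star (x : Fin n → ℂ) ⬝ᵥ A.mulVec x

lemma qf_eq_inner (A : Matrix (Fin n) (Fin n) ℂ) (x : EuclideanSpace ℂ (Fin n)) :
    qf A x = inner ℂ x (Matrix.toEuclideanCLM (𝕜 := ℂ) A x) := by
  rw [EuclideanSpace.inner_eq_star_dotProduct]
  simp [qf, dotProduct_comm]

lemma abs_qf_le_norm (A : Matrix (Fin n) (Fin n) ℂ) (x : EuclideanSpace ℂ (Fin n)) :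
    ‖qf A x‖ ≤ ‖A‖ * ‖x‖ ^ 2 := by
  rw [qf_eq_inner]
  calc ‖(inner ℂ x (Matrix.toEuclideanCLM (𝕜 := ℂ) A x) : ℂ)‖
      ≤ ‖x‖ * ‖Matrix.toEuclideanCLM (𝕜 := ℂ) A x‖ := norm_inner_le_norm _ _
    _ ≤ ‖x‖ * (‖A‖ * ‖x‖) := by
        refine mul_le_mul_of_nonneg_left ?_ (norm_nonneg x)
        exact (Matrix.toEuclideanCLM (𝕜 := ℂ) A).le_opNorm x
    _ = ‖A‖ * ‖x‖ ^ 2 := by ring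

lemma qf_smul (A : Matrix (Fin n) (Fin n) ℂ) (c : ℂ) (x : EuclideanSpace ℂ (Fin n)) :
    qf A (c • x) = (starRingEnd ℂ) c * c * qf A x := by
  simp only [qf_eq_inner, _root_.map_smul, inner_smul_left, inner_smul_right]
  ring

lemma qf_smulM (A : Matrix (Fin n) (Fin n) ℂ) (c : ℂ) (x : EuclideanSpace ℂ (Fin n)) :
    qf (c • A) x = c * qf A x := by
  simp only [qf, Matrix.smul_mulVec, dotProduct_smul, smul_eq_mul]

lemma qf_conjTranspose (A : Matrix (Fin n) (Fin n) ℂ) (x : EuclideanSpace ℂ (Fin n)) :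
    qf Aᴴ x = (starRingEnd ℂ) (qf A x) := by
  have : star (qf A x) = qf Aᴴ x := by
    simp only [qf]
    rw [Matrix.star_dotProduct, Matrix.star_mulVec, star_star,
      Matrix.dotProduct_mulVec]
  simpa using this.symm

lemma qf_add (A B : Matrix (Fin n) (Fin n) ℂ) (x : EuclideanSpace ℂ (Fin n)) :
    qf (A + B) x = qf A x + qf B x := by
  simp only [qf, Matrix.add_mulVec, dotProduct_add]

lemma qf_sub (A B : Matrix (Fin n) (Fin n) ℂ) (x : EuclideanSpace ℂ (Fin n)) :
    qf (A - B) x = qf A x - qf B x := by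
  simp only [qf, Matrix.sub_mulVec, dotProduct_sub]

lemma qf_reM (A : Matrix (Fin n) (Fin n) ℂ) (x : EuclideanSpace ℂ (Fin n)) :
    qf (reM A) x = ((qf A x).re : ℂ) := by
  rw [reM, qf_smulM, qf_add, qf_conjTranspose]
  rw [Complex.add_conj]
  push_cast
  ring

lemma qf_imM (A : Matrix (Fin n) (Fin n) ℂ) (x : EuclideanSpace ℂ (Fin n)) :
    qf (imM A) x = ((qf A x).im : ℂ) := by
  rw [imM, qf_smulM, qf_sub, qf_conjTranspose, Complex.sub_conj]
  push_cast
  simp only [Complex.ext_iff, Complex.mul_re, Complex.mul_im]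
  norm_num
  ring

lemma reM_add_I_imM (A : Matrix (Fin n) (Fin n) ℂ) :
    reM A + Complex.I • imM A = A := by
  rw [reM, imM, smul_smul]
  have : Complex.I * (-Complex.I / 2) = 1/2 := by
    rw [div_eq_mul_inv, ← mul_assoc, mul_neg, Complex.I_mul_I]; norm_num
  rw [this]
  module

lemma isHermitian_reM (A : Matrix (Fin n) (Fin n) ℂ) : (reM A).IsHermitian := by
  unfold Matrix.IsHermitian reM
  rw [Matrix.conjTranspose_smul, Matrix.conjTranspose_add, Matrix.conjTranspose_conjTranspose]
  congr 1
  · simp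
  · abel

lemma isHermitian_imM (A : Matrix (Fin n) (Fin n) ℂ) : (imM A).IsHermitian := by
  unfold Matrix.IsHermitian imM
  rw [Matrix.conjTranspose_smul, Matrix.conjTranspose_sub, Matrix.conjTranspose_conjTranspose]
  have h1 : star (-Complex.I / 2) = (Complex.I / 2 : ℂ) := by
    simp [star_div₀, Complex.star_def, map_div₀]
  rw [h1, smul_sub, smul_sub]
  module

lemma mem_abs_image {A : Matrix (Fin n) (Fin n) ℂ} {r : ℝ} :
    r ∈ (fun w : ℂ => ‖w‖) '' numRange A ↔
      ∃ x : EuclideanSpace ℂ (Fin n), ‖x‖ = 1 ∧ r = ‖qf A x‖ := by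
  constructor
  · rintro ⟨w, ⟨x, hx, rfl⟩, rfl⟩
    exact ⟨x, hx, rfl⟩
  · rintro ⟨x, hx, rfl⟩
    exact ⟨qf A x, ⟨x, hx, rfl⟩, rfl⟩

lemma abs_le_numRadius {A : Matrix (Fin n) (Fin n) ℂ} {w : ℂ} (hw : w ∈ numRange A) :
    ‖w‖ ≤ numRadius A := by
  apply le_csSup
  · refine ⟨‖A‖, ?_⟩
    rintro r hr
    rw [mem_abs_image] at hr
    obtain ⟨x, hx, rfl⟩ := hr
    have := abs_qf_le_norm A x
    rwa [hx, one_pow, mul_one] at this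
  · exact Set.mem_image_of_mem _ hw

lemma numRadius_nonneg (A : Matrix (Fin n) (Fin n) ℂ) : 0 ≤ numRadius A := by
  apply Real.sSup_nonneg
  rintro r ⟨w, _, rfl⟩
  exact norm_nonneg w

lemma numRadius_le_norm (A : Matrix (Fin n) (Fin n) ℂ) : numRadius A ≤ ‖A‖ := by
  apply Real.sSup_le _ (norm_nonneg _)
  rintro r hr
  rw [mem_abs_image] at hr
  obtain ⟨x, hx, rfl⟩ := hr
  have := abs_qf_le_norm A x
  rwa [hx, one_pow, mul_one] at this

lemma abs_qf_le_numRadius (A : Matrix (Fin n) (Fin n) ℂ) (x : EuclideanSpace ℂ (Fin n)) :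
    ‖qf A x‖ ≤ numRadius A * ‖x‖ ^ 2 := by
  by_cases hx : x = 0
  · subst hx
    have : qf A (0 : EuclideanSpace ℂ (Fin n)) = 0 := by
      have := qf_smul A 0 0
      simpa using this
    simp [this]
  · have hxn : ‖x‖ ≠ 0 := norm_ne_zero_iff.mpr hx
    set u : EuclideanSpace ℂ (Fin n) := (‖x‖ : ℂ)⁻¹ • x with hu
    have hun : ‖u‖ = 1 := by
      rw [hu, norm_smul]
      simp [hxn]
    have hq : qf A x = (‖x‖ : ℂ) ^ 2 * qf A u := by
      have hxu : x = (‖x‖ : ℂ) • u := by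
        rw [hu, smul_smul]
        rw [mul_inv_cancel₀ (by exact_mod_cast hxn)]
        simp
      conv_lhs => rw [hxu]
      rw [qf_smul]
      have : (starRingEnd ℂ) ((‖x‖ : ℝ) : ℂ) = (‖x‖ : ℂ) := Complex.conj_ofReal _
      rw [this]; ring
    rw [hq, norm_mul]
    have h1 : ‖(‖x‖ : ℂ) ^ 2‖ = ‖x‖ ^ 2 := by
      rw [norm_pow, Complex.norm_real, Real.norm_eq_abs, _root_.abs_of_nonneg (norm_nonneg x)]
    rw [h1]
    rw [mul_comm]
    exact mul_le_mul_of_nonneg_right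
      (abs_le_numRadius ⟨u, hun, rfl⟩) (by positivity)

lemma numRadius_smul_unit {A : Matrix (Fin n) (Fin n) ℂ} {z : ℂ}
    (hz : ‖z‖ = 1) : numRadius (z • A) = numRadius A := by
  unfold numRadius
  congr 1
  ext r
  have h : ∀ x : EuclideanSpace ℂ (Fin n),
      ‖qf (z • A) x‖ = ‖qf A x‖ := by
    intro x
    rw [qf_smulM, norm_mul, hz, one_mul]
  rw [mem_abs_image, mem_abs_image]
  constructor
  · rintro ⟨x, hx, rfl⟩; exact ⟨x, hx, h x⟩
  · rintro ⟨x, hx, rfl⟩; exact ⟨x, hx, (h x).symm⟩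

lemma norm_le_of_bound (A : Matrix (Fin n) (Fin n) ℂ) {c : ℝ} (hc : 0 ≤ c)
    (h : ∀ x : EuclideanSpace ℂ (Fin n), ‖Matrix.toEuclideanCLM (𝕜 := ℂ) A x‖ ≤ c * ‖x‖) :
    ‖A‖ ≤ c := by
  rw [Matrix.cstar_norm_def]
  exact ContinuousLinearMap.opNorm_le_bound _ hc h

lemma isSelfAdjoint_toCLM {M : Matrix (Fin n) (Fin n) ℂ} (hM : M.IsHermitian) :
    _root_.IsSelfAdjoint (Matrix.toEuclideanCLM (𝕜 := ℂ) M) := by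
  have h1 : star M = M := hM
  rw [_root_.IsSelfAdjoint, ← map_star, h1]

/-- norm of a Hermitian matrix is bounded by a bound on its quadratic form -/
lemma herm_norm_le {M : Matrix (Fin n) (Fin n) ℂ} (hM : M.IsHermitian) {c : ℝ} (hc : 0 ≤ c)
    (h : ∀ x, ‖qf M x‖ ≤ c * ‖x‖ ^ 2) : ‖M‖ ≤ c := by
  apply norm_le_of_bound M hc
  intro x
  set T := Matrix.toEuclideanCLM (𝕜 := ℂ) M with hT
  by_cases hTx : T x = 0
  · rw [hTx, norm_zero]
    positivity
  · have hx : x ≠ 0 := by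
      intro h0; apply hTx; rw [h0, map_zero]
    have hxn : (0 : ℝ) < ‖x‖ := norm_pos_iff.mpr hx
    have hTxn : (0 : ℝ) < ‖T x‖ := norm_pos_iff.mpr hTx
    set r : ℝ := ‖x‖ / ‖T x‖ with hr
    set y : EuclideanSpace ℂ (Fin n) := (r : ℂ) • T x with hy
    have hyn : ‖y‖ = ‖x‖ := by
      rw [hy, norm_smul, Complex.norm_real, Real.norm_eq_abs,
        _root_.abs_of_nonneg (by positivity : (0:ℝ) ≤ r), hr]
      field_simp
    have hsa : _root_.IsSelfAdjoint T := isSelfAdjoint_toCLM hM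
    set w : ℂ := inner ℂ y (T x) with hw
    have hinner : w = ((‖x‖ * ‖T x‖ : ℝ) : ℂ) := by
      rw [hw, hy, inner_smul_left, Complex.conj_ofReal,
        inner_self_eq_norm_sq_to_K (𝕜 := ℂ)]
      rw [hr]
      push_cast
      field_simp
      rfl
    have hconj : (inner ℂ x (T y) : ℂ) = (starRingEnd ℂ) w := by
      rw [hw, inner_conj_symm]
      exact (hsa.isSymmetric x y).symm
    have expand : qf M (x + y) - qf M (x - y) = 2 * ((starRingEnd ℂ) w + w) := by
      rw [qf_eq_inner, qf_eq_inner, ← hconj, ← hT]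
      simp only [map_add, map_sub, inner_add_left, inner_add_right,
        inner_sub_left, inner_sub_right]
      ring
    have hre : (qf M (x + y)).re - (qf M (x - y)).re = 4 * (‖x‖ * ‖T x‖) := by
      have := congrArg Complex.re expand
      rw [Complex.sub_re] at this
      rw [this]
      rw [hinner]
      simp [Complex.conj_ofReal]
      ring
    have hineq : 4 * (‖x‖ * ‖T x‖) ≤ 2 * c * (‖x‖ ^ 2 + ‖y‖ ^ 2) := by
      have h1 : (qf M (x + y)).re ≤ c * ‖x + y‖ ^ 2 :=
        le_trans (Complex.re_le_norm _) (h _)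
      have h2 : -(c * ‖x - y‖ ^ 2) ≤ (qf M (x - y)).re := by
        have ha := (Complex.abs_re_le_norm (qf M (x - y))).trans (h (x - y))
        have hb := neg_abs_le ((qf M (x - y)).re)
        linarith
      have hpar := parallelogram_law_with_norm ℂ x y
      nlinarith [h1, h2, hpar]
    rw [hyn] at hineq
    calc ‖T x‖ = (4 * (‖x‖ * ‖T x‖)) / (4 * ‖x‖) := by field_simp
      _ ≤ (2 * c * (‖x‖ ^ 2 + ‖x‖ ^ 2)) / (4 * ‖x‖) := by gcongr
      _ = c * ‖x‖ := by field_simp; ring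

lemma qf_normalize (A : Matrix (Fin n) (Fin n) ℂ) {x : EuclideanSpace ℂ (Fin n)}
    (hx : x ≠ 0) :
    qf A x = (‖x‖ : ℂ) ^ 2 * qf A ((‖x‖ : ℂ)⁻¹ • x) := by
  have hxn : ‖x‖ ≠ 0 := norm_ne_zero_iff.mpr hx
  have hxu : x = (‖x‖ : ℂ) • ((‖x‖ : ℂ)⁻¹ • x) := by
    rw [smul_smul, mul_inv_cancel₀ (by exact_mod_cast hxn)]
    simp
  conv_lhs => rw [hxu]
  rw [qf_smul, Complex.conj_ofReal]
  ring

lemma norm_normalize {x : EuclideanSpace ℂ (Fin n)} (hx : x ≠ 0) :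
    ‖(‖x‖ : ℂ)⁻¹ • x‖ = 1 := by
  have hxn : ‖x‖ ≠ 0 := norm_ne_zero_iff.mpr hx
  rw [norm_smul]
  simp [hxn]

lemma qf_one (x : EuclideanSpace ℂ (Fin n)) : qf 1 x = ((‖x‖ ^ 2 : ℝ) : ℂ) := by
  rw [qf_eq_inner, _root_.map_one]
  rw [ContinuousLinearMap.one_apply]
  rw [inner_self_eq_norm_sq_to_K (𝕜 := ℂ)]
  push_cast
  rfl

lemma qf_im_zero {M : Matrix (Fin n) (Fin n) ℂ} (hM : M.IsHermitian)
    (x : EuclideanSpace ℂ (Fin n)) : (qf M x).im = 0 := by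
  have h1 : (starRingEnd ℂ) (qf M x) = qf M x := by
    rw [← qf_conjTranspose, hM]
  exact Complex.conj_eq_iff_im.mp h1

lemma qf_sandwich {B : Matrix (Fin n) (Fin n) ℂ} (hB : B.IsHermitian)
    (M : Matrix (Fin n) (Fin n) ℂ) (x : EuclideanSpace ℂ (Fin n)) :
    qf (B * M * B) x = qf M ((WithLp.equiv 2 (Fin n → ℂ)).symm (B.mulVec x)) := by
  show star (x : Fin n → ℂ) ⬝ᵥ (B * M * B).mulVec x
      = star (B.mulVec x) ⬝ᵥ M.mulVec (B.mulVec x)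
  rw [← Matrix.mulVec_mulVec, ← Matrix.mulVec_mulVec]
  rw [Matrix.star_mulVec, hB]
  rw [Matrix.dotProduct_mulVec]

/-- The key single-matrix lemma: a rotated-sectorial matrix has norm at most
`sec α` times its numerical radius. -/
lemma key {A : Matrix (Fin n) (Fin n) ℂ} {α : ℝ} (hα : α ∈ Set.Ico 0 (Real.pi / 2))
    (hA : numRange A ⊆ sector α) : ‖A‖ ≤ (Real.cos α)⁻¹ * numRadius A := by
  classical
  obtain ⟨hα0, hα2⟩ := hα
  have hcos : 0 < Real.cos α :=
    Real.cos_pos_of_mem_Ioo ⟨by linarith [Real.pi_pos], hα2⟩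
  set t : ℝ := Real.tan α with htdef
  have ht : 0 ≤ t := Real.tan_nonneg_of_nonneg_of_le_pi_div_two hα0 (le_of_lt hα2)
  set s : ℝ := Real.sqrt (1 + t ^ 2) with hsdef
  have hs0 : 0 ≤ s := Real.sqrt_nonneg _
  have hseq : s = (Real.cos α)⁻¹ := by
    rw [hsdef, htdef]
    have h := Real.inv_sqrt_one_add_tan_sq hcos
    rw [← h, inv_inv]
  set H := reM A with hHdef
  set K := imM A with hKdef
  have hH : H.IsHermitian := isHermitian_reM A
  have hK : K.IsHermitian := isHermitian_imM A
  -- scalar sector facts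
  have hsec : ∀ x : EuclideanSpace ℂ (Fin n),
      0 ≤ (qf A x).re ∧ |(qf A x).im| ≤ t * (qf A x).re := by
    intro x
    by_cases hx : x = 0
    · subst hx
      have h0 : qf A (0 : EuclideanSpace ℂ (Fin n)) = 0 := by
        have := qf_smul A 0 0
        simpa using this
      simp [h0]
    · have hu := norm_normalize hx
      have hq := qf_normalize A hx
      have hmem : qf A ((‖x‖ : ℂ)⁻¹ • x) ∈ numRange A :=
        ⟨(‖x‖ : ℂ)⁻¹ • x, hu, rfl⟩
      obtain ⟨hre, him⟩ := hA hmem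
      have hre' : 0 ≤ (qf A ((‖x‖ : ℂ)⁻¹ • x)).re := le_of_lt hre
      have hqre : (qf A x).re = ‖x‖ ^ 2 * (qf A ((‖x‖ : ℂ)⁻¹ • x)).re := by
        rw [hq]
        rw [show ((‖x‖ : ℂ) ^ 2) = ((‖x‖ ^ 2 : ℝ) : ℂ) by push_cast; ring]
        rw [Complex.re_ofReal_mul]
      have hqim : (qf A x).im = ‖x‖ ^ 2 * (qf A ((‖x‖ : ℂ)⁻¹ • x)).im := by
        rw [hq]
        rw [show ((‖x‖ : ℂ) ^ 2) = ((‖x‖ ^ 2 : ℝ) : ℂ) by push_cast; ring]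
        rw [Complex.im_ofReal_mul]
      constructor
      · rw [hqre]; positivity
      · rw [hqre, hqim, abs_mul, _root_.abs_of_nonneg (by positivity : (0:ℝ) ≤ ‖x‖ ^ 2)]
        calc ‖x‖ ^ 2 * |(qf A ((‖x‖ : ℂ)⁻¹ • x)).im|
            ≤ ‖x‖ ^ 2 * (t * (qf A ((‖x‖ : ℂ)⁻¹ • x)).re) := by
              apply mul_le_mul_of_nonneg_left him (by positivity)
          _ = t * (‖x‖ ^ 2 * (qf A ((‖x‖ : ℂ)⁻¹ • x)).re) := by ring
  -- qf H and qf K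
  have hqH : ∀ x, qf H x = (((qf A x).re : ℝ) : ℂ) := fun x => qf_reM A x
  have hqK : ∀ x, qf K x = (((qf A x).im : ℝ) : ℂ) := fun x => qf_imM A x
  -- ‖H‖ ≤ numRadius A
  have hHnorm : ‖H‖ ≤ numRadius A := by
    apply herm_norm_le hH (numRadius_nonneg A)
    intro x
    rw [hqH, Complex.norm_real, Real.norm_eq_abs, _root_.abs_of_nonneg (hsec x).1]
    exact le_trans (Complex.re_le_norm _) (abs_qf_le_numRadius A x)
  -- the epsilon step
  have hmain : ∀ ε : ℝ, 0 < ε → ‖A‖ ≤ s * (‖H‖ + ε) + ε := by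
    intro ε hε
    set Hε : Matrix (Fin n) (Fin n) ℂ := H + (ε : ℂ) • 1 with hHε
    have hqHε : ∀ x : EuclideanSpace ℂ (Fin n),
        qf Hε x = (((qf A x).re + ε * ‖x‖ ^ 2 : ℝ) : ℂ) := by
      intro x
      rw [hHε, qf_add, hqH, qf_smulM, qf_one]
      push_cast
      ring
    have hHεH : Hε.IsHermitian := by
      apply hH.add
      unfold Matrix.IsHermitian
      rw [Matrix.conjTranspose_smul, Matrix.conjTranspose_one]
      congr 1
      simp [Complex.star_def, Complex.conj_ofReal]
    have hPD : Hε.PosDef := by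
      refine Matrix.PosDef.of_dotProduct_mulVec_pos hHεH (fun x hx => ?_)
      have hx' : (WithLp.equiv 2 (Fin n → ℂ)).symm x ≠ 0 := by
        intro h0
        apply hx
        simpa using congrArg (WithLp.equiv 2 (Fin n → ℂ)) h0
      have hxe : (0:ℝ) < ‖(WithLp.equiv 2 (Fin n → ℂ)).symm x‖ := norm_pos_iff.mpr hx'
      have := hqHε ((WithLp.equiv 2 (Fin n → ℂ)).symm x)
      have heq : star x ⬝ᵥ Hε.mulVec x
          = (((qf A ((WithLp.equiv 2 (Fin n → ℂ)).symm x)).re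
              + ε * ‖(WithLp.equiv 2 (Fin n → ℂ)).symm x‖ ^ 2 : ℝ) : ℂ) := this
      rw [heq]
      rw [Complex.zero_lt_real]
      have h1 := (hsec ((WithLp.equiv 2 (Fin n → ℂ)).symm x)).1
      have h2 : 0 < ε * ‖(WithLp.equiv 2 (Fin n → ℂ)).symm x‖ ^ 2 := by positivity
      linarith
    have hPSD := hPD.posSemidef
    obtain ⟨R, hRH, hRR⟩ : ∃ R : Matrix (Fin n) (Fin n) ℂ, R.IsHermitian ∧ R * R = Hε :=
      by
        open scoped MatrixOrder in
        obtain ⟨X, hX, -, hXX⟩ := CFC.exists_sqrt_of_isSelfAdjoint_of_quasispectrumRestricts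
          hPSD.isHermitian (QuasispectrumRestricts.nnreal_of_nonneg hPSD.nonneg)
        exact ⟨X, hX, hXX⟩
    have hdet : IsUnit R.det := by
      have h1 : R.det * R.det = Hε.det := by
        rw [← Matrix.det_mul, hRR]
      have h2 : 0 < Hε.det := hPD.det_pos
      rw [isUnit_iff_ne_zero]
      intro h0
      rw [h0, mul_zero] at h1
      exact absurd h1.symm (ne_of_gt h2)
    have hRRi : R * R⁻¹ = 1 := Matrix.mul_nonsing_inv R hdet
    have hRiR : R⁻¹ * R = 1 := Matrix.nonsing_inv_mul R hdet
    have hRiH : (R⁻¹).IsHermitian := by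
      unfold Matrix.IsHermitian
      rw [Matrix.conjTranspose_nonsing_inv, hRH]
    set C : Matrix (Fin n) (Fin n) ℂ := R⁻¹ * K * R⁻¹ with hCdef
    have hCH : C.IsHermitian := by
      unfold Matrix.IsHermitian
      rw [hCdef, Matrix.conjTranspose_mul, Matrix.conjTranspose_mul, hRiH, hK]
      rw [Matrix.mul_assoc]
    have hCbound : ∀ x : EuclideanSpace ℂ (Fin n),
        ‖qf C x‖ ≤ t * ‖x‖ ^ 2 := by
      intro x
      have h1 : qf C x = qf K ((WithLp.equiv 2 (Fin n → ℂ)).symm (R⁻¹.mulVec x)) :=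
        qf_sandwich hRiH K x
      set y : EuclideanSpace ℂ (Fin n) := (WithLp.equiv 2 (Fin n → ℂ)).symm (R⁻¹.mulVec x)
        with hydef
      have h2 : ‖qf K y‖ ≤ t * (qf A y).re := by
        rw [hqK, Complex.norm_real, Real.norm_eq_abs]
        exact (hsec y).2
      have h3 : (qf A y).re ≤ ‖x‖ ^ 2 := by
        have h4 : qf Hε y = (((qf A y).re + ε * ‖y‖ ^ 2 : ℝ) : ℂ) := hqHε y
        have h5 : qf Hε y = qf (R * R) y := by rw [hRR]
        have h6 : qf (R * R) y = qf 1 ((WithLp.equiv 2 (Fin n → ℂ)).symm (R.mulVec y)) := by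
          have := qf_sandwich hRH 1 y
          rwa [Matrix.mul_one] at this
        have h7 : R.mulVec y = (x : Fin n → ℂ) := by
          rw [hydef]
          show R.mulVec (R⁻¹.mulVec x) = _
          rw [Matrix.mulVec_mulVec, hRRi, Matrix.one_mulVec]
        have h8 : qf Hε y = ((‖x‖ ^ 2 : ℝ) : ℂ) := by
          rw [h5, h6, h7, qf_one]
          congr 1
        have h9 : (qf A y).re + ε * ‖y‖ ^ 2 = ‖x‖ ^ 2 := by
          have := h4.symm.trans h8
          exact_mod_cast Complex.ofReal_inj.mp this
        nlinarith [sq_nonneg ‖y‖]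
      calc ‖qf C x‖ = ‖qf K y‖ := by rw [h1]
        _ ≤ t * (qf A y).re := h2
        _ ≤ t * ‖x‖ ^ 2 := mul_le_mul_of_nonneg_left h3 ht
    have hCnorm : ‖C‖ ≤ t := herm_norm_le hCH ht hCbound
    -- norm of 1 + I • C
    have honeC : ‖(1 : Matrix (Fin n) (Fin n) ℂ) + Complex.I • C‖ ≤ s := by
      apply norm_le_of_bound _ hs0
      intro x
      rw [map_add, _root_.map_one, _root_.map_smul]
      rw [ContinuousLinearMap.add_apply, ContinuousLinearMap.one_apply,
        ContinuousLinearMap.smul_apply]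
      set Cx := Matrix.toEuclideanCLM (𝕜 := ℂ) C x with hCx
      have hre0 : (inner ℂ x (Complex.I • Cx) : ℂ).re = 0 := by
        rw [inner_smul_right]
        have : (inner ℂ x Cx : ℂ) = qf C x := (qf_eq_inner C x).symm
        rw [this]
        rw [Complex.mul_re, Complex.I_re, Complex.I_im]
        rw [qf_im_zero hCH]
        ring
      have hnormsq : ‖x + Complex.I • Cx‖ ^ 2 = ‖x‖ ^ 2 + ‖Cx‖ ^ 2 := by
        rw [@norm_add_sq ℂ _ _ _ _ x (Complex.I • Cx)]
        rw [show (RCLike.re (inner ℂ x (Complex.I • Cx) : ℂ)) = (inner ℂ x (Complex.I • Cx) : ℂ).re from rfl]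
        rw [hre0, norm_smul]
        simp
      have hCxb : ‖Cx‖ ≤ t * ‖x‖ := by
        calc ‖Cx‖ ≤ ‖C‖ * ‖x‖ := by
              rw [hCx, Matrix.cstar_norm_def]
              exact (Matrix.toEuclideanCLM (𝕜 := ℂ) C).le_opNorm x
          _ ≤ t * ‖x‖ := mul_le_mul_of_nonneg_right hCnorm (norm_nonneg x)
      have h10 : ‖x + Complex.I • Cx‖ ^ 2 ≤ (1 + t ^ 2) * ‖x‖ ^ 2 := by
        rw [hnormsq]
        nlinarith [norm_nonneg Cx, norm_nonneg x]
      calc ‖x + Complex.I • Cx‖ = Real.sqrt (‖x + Complex.I • Cx‖ ^ 2) := by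
            rw [Real.sqrt_sq (norm_nonneg _)]
        _ ≤ Real.sqrt ((1 + t ^ 2) * ‖x‖ ^ 2) := Real.sqrt_le_sqrt h10
        _ = s * ‖x‖ := by
            rw [Real.sqrt_mul (by positivity), Real.sqrt_sq (norm_nonneg x), hsdef]
    -- decomposition
    have hdecomp : A + (ε : ℂ) • 1 = R * ((1 : Matrix (Fin n) (Fin n) ℂ) + Complex.I • C) * R := by
      have h1 : R * ((1 : Matrix (Fin n) (Fin n) ℂ) + Complex.I • C) * R
          = R * R + Complex.I • (R * C * R) := by
        rw [Matrix.mul_add, Matrix.mul_one, Matrix.add_mul]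
        congr 1
        rw [Matrix.mul_smul, Matrix.smul_mul]
      have h2 : R * C * R = K := by
        rw [hCdef]
        calc R * (R⁻¹ * K * R⁻¹) * R = (R * R⁻¹) * K * (R⁻¹ * R) := by
              simp only [Matrix.mul_assoc]
          _ = K := by rw [hRRi, hRiR, Matrix.one_mul, Matrix.mul_one]
      rw [h1, h2, hRR, hHε]
      have := reM_add_I_imM A
      rw [← hHdef, ← hKdef] at this
      rw [← this]
      abel
    have hone_le : ‖(1 : Matrix (Fin n) (Fin n) ℂ)‖ ≤ 1 := by
      rw [Matrix.cstar_norm_def, _root_.map_one]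
      rw [ContinuousLinearMap.one_def]
      exact ContinuousLinearMap.norm_id_le
    have hRsq : ‖R‖ * ‖R‖ = ‖Hε‖ := by
      have := Matrix.l2_opNorm_conjTranspose_mul_self R
      rw [hRH, hRR] at this
      exact this.symm
    have hHεnorm : ‖Hε‖ ≤ ‖H‖ + ε := by
      rw [hHε]
      calc ‖H + (ε : ℂ) • 1‖ ≤ ‖H‖ + ‖(ε : ℂ) • (1 : Matrix (Fin n) (Fin n) ℂ)‖ :=
            norm_add_le _ _
        _ ≤ ‖H‖ + ε := by
            rw [norm_smul, Complex.norm_real, Real.norm_eq_abs,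
              _root_.abs_of_nonneg (le_of_lt hε)]
            have : ε * ‖(1 : Matrix (Fin n) (Fin n) ℂ)‖ ≤ ε * 1 :=
              mul_le_mul_of_nonneg_left hone_le (le_of_lt hε)
            linarith
    -- put it together
    have hprod : ‖R * ((1 : Matrix (Fin n) (Fin n) ℂ) + Complex.I • C) * R‖ ≤ s * (‖H‖ + ε) := by
      calc ‖R * ((1 : Matrix (Fin n) (Fin n) ℂ) + Complex.I • C) * R‖
          ≤ ‖R * ((1 : Matrix (Fin n) (Fin n) ℂ) + Complex.I • C)‖ * ‖R‖ :=
            Matrix.l2_opNorm_mul _ _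
        _ ≤ (‖R‖ * ‖(1 : Matrix (Fin n) (Fin n) ℂ) + Complex.I • C‖) * ‖R‖ := by
            apply mul_le_mul_of_nonneg_right (Matrix.l2_opNorm_mul _ _) (norm_nonneg _)
        _ = ‖(1 : Matrix (Fin n) (Fin n) ℂ) + Complex.I • C‖ * (‖R‖ * ‖R‖) := by ring
        _ ≤ s * (‖R‖ * ‖R‖) := by
            apply mul_le_mul_of_nonneg_right honeC
            exact mul_nonneg (norm_nonneg _) (norm_nonneg _)
        _ = s * ‖Hε‖ := by rw [hRsq]
        _ ≤ s * (‖H‖ + ε) := mul_le_mul_of_nonneg_left hHεnorm hs0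
    calc ‖A‖ = ‖(A + (ε : ℂ) • 1) - (ε : ℂ) • (1 : Matrix (Fin n) (Fin n) ℂ)‖ := by
          congr 1
          abel
      _ ≤ ‖A + (ε : ℂ) • 1‖ + ‖(ε : ℂ) • (1 : Matrix (Fin n) (Fin n) ℂ)‖ := norm_sub_le _ _
      _ ≤ s * (‖H‖ + ε) + ε := by
          apply add_le_add
          · rw [hdecomp]; exact hprod
          · rw [norm_smul, Complex.norm_real, Real.norm_eq_abs,
              _root_.abs_of_nonneg (le_of_lt hε)]
            have : ε * ‖(1 : Matrix (Fin n) (Fin n) ℂ)‖ ≤ ε * 1 :=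
              mul_le_mul_of_nonneg_left hone_le (le_of_lt hε)
            linarith
  -- take the limit
  have hlim : ‖A‖ ≤ s * ‖H‖ := by
    apply le_of_forall_pos_le_add
    intro δ hδ
    have hsd : (0:ℝ) < s + 1 := by linarith
    have := hmain (δ / (s + 1)) (by positivity)
    calc ‖A‖ ≤ s * (‖H‖ + δ / (s + 1)) + δ / (s + 1) := this
      _ = s * ‖H‖ + (s + 1) * (δ / (s + 1)) := by ring
      _ = s * ‖H‖ + δ := by rw [mul_div_cancel₀ _ (ne_of_gt hsd)]
  calc ‖A‖ ≤ s * ‖H‖ := hlim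
    _ ≤ s * numRadius A := mul_le_mul_of_nonneg_left hHnorm hs0
    _ = (Real.cos α)⁻¹ * numRadius A := by rw [hseq]

end SecAux

theorem numRadius_list_prod_le_sec {n m : ℕ} (hm : 0 < m)
    (X : Fin m → Matrix (Fin n) (Fin n) ℂ) (α : Fin m → ℝ) (z : Fin m → ℂ)
    (hα : ∀ j, α j ∈ Set.Ico 0 (Real.pi / 2)) (hz : ∀ j, ‖z j‖ = 1)
    (hX : ∀ j, numRange (z j • X j) ⊆ sector (α j)) :
    numRadius (List.ofFn X).prod ≤ ∏ j : Fin m, (Real.cos (α j))⁻¹ * numRadius (X j) := by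
  have h1 : numRadius (List.ofFn X).prod ≤ ‖(List.ofFn X).prod‖ :=
    SecAux.numRadius_le_norm _
  have hne : List.ofFn X ≠ [] := by
    intro h
    have h' : (List.ofFn X).length = m := List.length_ofFn
    rw [h] at h'
    simp at h'
    omega
  have h2 : ‖(List.ofFn X).prod‖ ≤ ((List.ofFn X).map (fun M => ‖M‖)).prod :=
    List.norm_prod_le' hne
  have h3 : ((List.ofFn X).map (fun M => ‖M‖)).prod = ∏ j : Fin m, ‖X j‖ := by
    rw [List.map_ofFn, List.prod_ofFn]
    rfl
  have h4 : ∀ j, ‖X j‖ ≤ (Real.cos (α j))⁻¹ * numRadius (X j) := by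
    intro j
    have hz1 : ‖z j‖ = 1 := hz j
    have he : ‖X j‖ = ‖z j • X j‖ := by rw [norm_smul, hz1, one_mul]
    rw [he]
    have hk := SecAux.key (hα j) (hX j)
    rwa [SecAux.numRadius_smul_unit (hz j)] at hk
  calc numRadius (List.ofFn X).prod ≤ ∏ j : Fin m, ‖X j‖ := by
        rw [← h3]; exact le_trans h1 h2
    _ ≤ ∏ j : Fin m, (Real.cos (α j))⁻¹ * numRadius (X j) :=
      Finset.prod_le_prod (fun j _ => norm_nonneg _) (fun j _ => h4 j)
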